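/- The objective function H determines the level-wise violation costs uniquely: for all V_A, V_B ⊆ WC, H(V_A) = H(V_B) if and only if for every level i ∈ {1,…,lmax}, Σ_{w ∈ V_A, level(w) = i} weight(w) = Σ_{w ∈ V_B, level(w) = i} weight(w). -/
import Mathlib

private lemma f_mono (B : ℕ) (hB : 1 ≤ B) (f : ℕ → ℕ) (hf1 : f 1 = 1)
    (hfs : ∀ n : ℕ, 1 ≤ n → f (n + 1) = f n * B + 1) :
    ∀ n i, 1 ≤ i → i ≤ n → f i ≤ f n := by
  intro n
  induction n with
  | zero => intro i h1 h0; omega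
  | succ n ih =>
    intro i h1 hi
    rcases Nat.lt_or_ge i (n+1) with h | h
    · have hn : 1 ≤ n := by omega
      calc f i ≤ f n := ih i h1 (by omega)
        _ ≤ f n * B := Nat.le_mul_of_pos_right _ hB
        _ ≤ f (n+1) := by rw [hfs n hn]; omega
    · have : i = n + 1 := by omega
      exact this ▸ le_rfl

private lemma partial_lt (B : ℕ) (hB : 1 ≤ B) (f : ℕ → ℕ) (hf1 : f 1 = 1)
    (hfs : ∀ n : ℕ, 1 ≤ n → f (n + 1) = f n * B + 1) (n : ℕ) (s : ℕ → ℕ)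
    (hs : ∑ i ∈ Finset.Icc 1 n, s i ≤ B) :
    ∑ i ∈ Finset.Icc 1 n, f i * s i < f (n + 1) := by
  rcases Nat.eq_zero_or_pos n with rfl | hn
  · simp [hf1]
  have h1 : ∑ i ∈ Finset.Icc 1 n, f i * s i ≤ ∑ i ∈ Finset.Icc 1 n, f n * s i := by
    apply Finset.sum_le_sum
    intro i hi
    simp only [Finset.mem_Icc] at hi
    exact Nat.mul_le_mul_right _ (f_mono B hB f hf1 hfs n i hi.1 hi.2)
  have h2 : ∑ i ∈ Finset.Icc 1 n, f n * s i = f n * ∑ i ∈ Finset.Icc 1 n, s i :=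
    (Finset.mul_sum _ _ _).symm
  have h3 : f n * ∑ i ∈ Finset.Icc 1 n, s i ≤ f n * B := Nat.mul_le_mul_left _ hs
  have h4 : f (n+1) = f n * B + 1 := hfs n hn
  omega

private lemma digits_unique (B : ℕ) (hB : 1 ≤ B) (f : ℕ → ℕ) (hf1 : f 1 = 1)
    (hfs : ∀ n : ℕ, 1 ≤ n → f (n + 1) = f n * B + 1) :
    ∀ n (s t : ℕ → ℕ), (∑ i ∈ Finset.Icc 1 n, s i ≤ B) →
      (∑ i ∈ Finset.Icc 1 n, t i ≤ B) →
      (∑ i ∈ Finset.Icc 1 n, f i * s i = ∑ i ∈ Finset.Icc 1 n, f i * t i) →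
      ∀ i ∈ Finset.Icc 1 n, s i = t i := by
  intro n
  induction n with
  | zero => intro s t _ _ _ i hi; simp at hi
  | succ n ih =>
    intro s t hs ht heq i hi
    have hsub : Finset.Icc 1 n ⊆ Finset.Icc 1 (n+1) :=
      Finset.Icc_subset_Icc_right (by omega)
    have hsplitA : ∑ i ∈ Finset.Icc 1 (n+1), f i * s i =
        (∑ i ∈ Finset.Icc 1 n, f i * s i) + f (n+1) * s (n+1) :=
      Finset.sum_Icc_succ_top (by omega) _
    have hsplitB : ∑ i ∈ Finset.Icc 1 (n+1), f i * t i =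
        (∑ i ∈ Finset.Icc 1 n, f i * t i) + f (n+1) * t (n+1) :=
      Finset.sum_Icc_succ_top (by omega) _
    have hsA : ∑ i ∈ Finset.Icc 1 n, s i ≤ B :=
      le_trans (Finset.sum_le_sum_of_subset hsub) hs
    have hsB : ∑ i ∈ Finset.Icc 1 n, t i ≤ B :=
      le_trans (Finset.sum_le_sum_of_subset hsub) ht
    have hltA := partial_lt B hB f hf1 hfs n s hsA
    have hltB := partial_lt B hB f hf1 hfs n t hsB
    set RA := ∑ i ∈ Finset.Icc 1 n, f i * s i with hRA
    set RB := ∑ i ∈ Finset.Icc 1 n, f i * t i with hRB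
    have hEq : RA + f (n+1) * s (n+1) = RB + f (n+1) * t (n+1) := by
      rw [← hsplitA, ← hsplitB]; exact heq
    have hfpos : 0 < f (n+1) := by omega
    have htop : s (n+1) = t (n+1) := by
      have hA : (RA + f (n+1) * s (n+1)) / f (n+1) = s (n+1) := by
        rw [Nat.add_mul_div_left _ _ hfpos, Nat.div_eq_of_lt hltA]; omega
      have hB' : (RB + f (n+1) * t (n+1)) / f (n+1) = t (n+1) := by
        rw [Nat.add_mul_div_left _ _ hfpos, Nat.div_eq_of_lt hltB]; omega
      rw [← hA, ← hB', hEq]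
    have hrest : RA = RB := by
      rw [htop] at hEq; omega
    simp only [Finset.mem_Icc] at hi
    rcases Nat.lt_or_ge i (n+1) with h | h
    · exact ih s t hsA hsB hrest i (Finset.mem_Icc.mpr ⟨hi.1, by omega⟩)
    · have : i = n + 1 := by omega
      rw [this]; exact htop

private lemma fiber_sum_le {ι : Type*} (WC : Finset ι) (weight level : ι → ℕ)
    (wmax lmax : ℕ) (hwle : ∀ w ∈ WC, weight w ≤ wmax)
    (hlev : ∀ w ∈ WC, level w ∈ Finset.Icc 1 lmax)
    (V : Finset ι) (hV : V ⊆ WC) :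
    ∑ i ∈ Finset.Icc 1 lmax, ∑ w ∈ V.filter (fun w => level w = i), weight w ≤
      WC.card * wmax := by
  have h1 : ∑ i ∈ Finset.Icc 1 lmax, ∑ w ∈ V.filter (fun w => level w = i), weight w
      = ∑ w ∈ V, weight w :=
    Finset.sum_fiberwise_of_maps_to (fun w hw => hlev w (hV hw)) _
  rw [h1]
  calc ∑ w ∈ V, weight w ≤ ∑ w ∈ WC, weight w :=
        Finset.sum_le_sum_of_subset hV
    _ ≤ WC.card * wmax := by
        have := Finset.sum_le_card_nsmul WC weight wmax hwle
        simpa [smul_eq_mul] using this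

/-- the objective function `H` determines the level-wise violation costs
uniquely. -/
theorem H_eq_iff_levelwise_eq {ι : Type*} (WC : Finset ι) (hWC : WC.Nonempty)
    (weight level : ι → ℕ) (wmax lmax : ℕ) (hlmax : 1 ≤ lmax) (hwmax : 1 ≤ wmax)
    (hw1 : ∀ w ∈ WC, 1 ≤ weight w) (hwle : ∀ w ∈ WC, weight w ≤ wmax)
    (hlev : ∀ w ∈ WC, level w ∈ Finset.Icc 1 lmax)
    (f : ℕ → ℕ) (hf1 : f 1 = 1)
    (hfs : ∀ n : ℕ, 1 ≤ n → f (n + 1) = f n * (WC.card * wmax) + 1)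
    (VA VB : Finset ι) (hVA : VA ⊆ WC) (hVB : VB ⊆ WC) :
    (∑ i ∈ Finset.Icc 1 lmax,
        f i * ∑ w ∈ VA.filter (fun w => level w = i), weight w) =
      (∑ i ∈ Finset.Icc 1 lmax,
        f i * ∑ w ∈ VB.filter (fun w => level w = i), weight w) ↔
    ∀ i ∈ Finset.Icc 1 lmax,
      ∑ w ∈ VA.filter (fun w => level w = i), weight w =
        ∑ w ∈ VB.filter (fun w => level w = i), weight w := by
  constructor
  · intro heq
    have hc : 1 ≤ WC.card := Finset.card_pos.mpr hWC
    have hB : 1 ≤ WC.card * wmax := Nat.one_le_iff_ne_zero.mpr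
      (Nat.mul_ne_zero (by omega) (by omega))
    exact digits_unique (WC.card * wmax) hB f hf1 hfs lmax _ _
      (fiber_sum_le WC weight level wmax lmax hwle hlev VA hVA)
      (fiber_sum_le WC weight level wmax lmax hwle hlev VB hVB) heq
  · intro h
    exact Finset.sum_congr rfl (fun i hi => by rw [h i hi])
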